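/- If α is a complex root of u(x) = x^{m+1}(x^{m+1}+x)^k − 1 with |α| = r₊ (the unique positive real root), then α = ζ·r₊ for some m-th root of unity ζ. -/

import Mathlib

theorem equality_case_root_of_unity (m k : ℕ) (hm : 1 ≤ m) (hk : 1 ≤ k) (r : ℝ) (hr : 0 < r)
    (hroot : r ^ (m + 1) * (r ^ (m + 1) + r) ^ k - 1 = 0)
    (α : ℂ) (hα : α ^ (m + 1) * (α ^ (m + 1) + α) ^ k - 1 = 0)
    (habs : ‖α‖ = r) :
    ∃ ζ : ℂ, ζ ^ m = 1 ∧ α = ζ * r := by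
  have hα1 : α ^ (m + 1) * (α ^ (m + 1) + α) ^ k = 1 := by linear_combination hα
  have hr1 : r ^ (m + 1) * (r ^ (m + 1) + r) ^ k = 1 := by linarith
  have hαne : α ≠ 0 := by
    intro h; rw [h, norm_zero] at habs; exact hr.ne habs
  have habs1 : r ^ (m + 1) * (‖α ^ (m + 1) + α‖) ^ k = 1 := by
    have := congrArg (‖·‖) hα1
    simpa [norm_mul, norm_pow, habs] using this
  have hrm1 : (0:ℝ) < r ^ (m + 1) := pow_pos hr _
  have hkey : (‖α ^ (m + 1) + α‖) ^ k = (r ^ (m + 1) + r) ^ k :=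
    mul_left_cancel₀ hrm1.ne' (habs1.trans hr1.symm)
  have heq : ‖α ^ (m + 1) + α‖ = r ^ (m + 1) + r := by
    have hk0 : k ≠ 0 := by omega
    exact (pow_left_inj₀ (norm_nonneg _) (by positivity) hk0).mp hkey
  -- equality in the triangle inequality ⇒ same ray
  have hray : SameRay ℝ (α ^ (m + 1)) α := by
    rw [sameRay_iff_norm_add]
    have h1 : ‖α ^ (m + 1)‖ = r ^ (m + 1) := by
      rw [norm_pow, habs]
    have h2 : ‖α‖ = r := by rw [habs]
    rw [h1, h2, heq]
  obtain ⟨c, hc, hcα⟩ := hray.exists_pos_right (pow_ne_zero _ hαne) hαne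
  -- α ^ (m+1) = c • α hence α ^ m = c
  have hsm : α ^ (m + 1) = (c : ℂ) * α := by
    rw [hcα, Complex.real_smul]
  have hαm : α ^ m = (c : ℂ) := by
    have : α ^ m * α = (c : ℂ) * α := by rw [← pow_succ]; exact hsm
    exact mul_right_cancel₀ hαne this
  have hcr : c = r ^ m := by
    have := congrArg (‖·‖) hαm
    rw [norm_pow, habs, Complex.norm_of_nonneg hc.le] at this
    exact this.symm
  have hrC : (r : ℂ) ≠ 0 := Complex.ofReal_ne_zero.mpr hr.ne'
  refine ⟨α / r, ?_, ?_⟩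
  · rw [div_pow, hαm, hcr]
    push_cast
    exact div_self (pow_ne_zero _ hrC)
  · rw [div_mul_cancel₀ α hrC]
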